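/- Let m ∈ M with ‖m‖₁ > 0, let a ∈ (0,1), and let c ∈ M be a minimizer of the soft-Dice loss SD_m over M. Then the thresholded function I_{[a,1]}∘c (equal to 1 where c ≥ a and 0 elsewhere) is a maximizer of the Dice score D_m over S. -/
import Mathlib


open MeasureTheory Filter

noncomputable section

/-- The unit cube `[0,1]^n`. -/
def cube (n : ℕ) : Set (Fin n → ℝ) := Set.univ.pi fun _ => Set.Icc (0:ℝ) 1

/-- The (normalized) Lebesgue measure on the unit cube. -/
def lam (n : ℕ) : Measure (Fin n → ℝ) := volume.restrict (cube n)

/-- The `L¹`-volume `‖f‖₁ = ∫ f dλ` (for nonnegative `f`). -/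
def vol1 (n : ℕ) (f : (Fin n → ℝ) → ℝ) : ℝ := ∫ ω, f ω ∂(lam n)

/-- The Dice score `D_m(s) = 2∫ s·m dλ / (‖s‖₁ + ‖m‖₁)`. -/
def Dice (n : ℕ) (m s : (Fin n → ℝ) → ℝ) : ℝ :=
  2 * (∫ ω, s ω * m ω ∂(lam n)) / (vol1 n s + vol1 n m)

/-- The soft-Dice loss `SD_m(c) = 1 - 2∫ c·m dλ / (‖c‖₁ + ‖m‖₁)`. -/
def softDice (n : ℕ) (m c : (Fin n → ℝ) → ℝ) : ℝ :=
  1 - 2 * (∫ ω, c ω * m ω ∂(lam n)) / (vol1 n c + vol1 n m)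

/-- Membership in `M`: measurable with values in `[0,1]`. -/
def MemM (n : ℕ) (m : (Fin n → ℝ) → ℝ) : Prop :=
  Measurable m ∧ ∀ ω, m ω ∈ Set.Icc (0:ℝ) 1

/-- Membership in `S`: measurable with values in `{0,1}`. -/
def MemS (n : ℕ) (s : (Fin n → ℝ) → ℝ) : Prop :=
  Measurable s ∧ ∀ ω, s ω = 0 ∨ s ω = 1

/-- The set of soft-Dice values over `M`. -/
def SDvals (n : ℕ) (m : (Fin n → ℝ) → ℝ) : Set ℝ :=
  {x : ℝ | ∃ c, MemM n c ∧ x = softDice n m c}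

/-- The set of Dice values over `S`. -/
def Dvals (n : ℕ) (m : (Fin n → ℝ) → ℝ) : Set ℝ :=
  {x : ℝ | ∃ s, MemS n s ∧ x = Dice n m s}

lemma cube_volume (n : ℕ) : volume (cube n) = 1 := by
  rw [cube, volume_pi_pi]
  simp [Real.volume_Icc]

instance lam_prob (n : ℕ) : IsProbabilityMeasure (lam n) :=
  ⟨by rw [lam, Measure.restrict_apply_univ, cube_volume n]⟩

lemma integrable_bdd {n : ℕ} {f : (Fin n → ℝ) → ℝ} (hf : Measurable f)
    {C : ℝ} (h : ∀ ω, |f ω| ≤ C) : Integrable f (lam n) :=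
  (integrable_const C).mono' hf.aestronglyMeasurable (Filter.Eventually.of_forall h)

theorem thresholded_soft_dice_minimizer_is_dice_maximizer
    (n : ℕ) (m : (Fin n → ℝ) → ℝ) (hm : MemM n m) (hpos : 0 < vol1 n m)
    (a : ℝ) (ha : a ∈ Set.Ioo (0:ℝ) 1)
    (c : (Fin n → ℝ) → ℝ) (hc : MemM n c)
    (hmin : softDice n m c = sInf (SDvals n m)) :
    Dice n m (fun ω => if a ≤ c ω then (1:ℝ) else 0) = sSup (Dvals n m) := by
  classical
  obtain ⟨hmM, hm01⟩ := hm
  have hcM := hc.1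
  have hc01 := hc.2
  obtain ⟨ha0, ha1⟩ := ha
  have hm0 : ∀ ω, 0 ≤ m ω := fun ω => (hm01 ω).1
  have hm1 : ∀ ω, m ω ≤ 1 := fun ω => (hm01 ω).2
  -- basic integrability facts
  have int_of_M : ∀ {f : (Fin n → ℝ) → ℝ}, MemM n f → Integrable f (lam n) := by
    intro f hf
    exact integrable_bdd hf.1 (C := 1)
      (fun ω => abs_le.2 ⟨by linarith [(hf.2 ω).1], (hf.2 ω).2⟩)
  have int_mul_m : ∀ {f : (Fin n → ℝ) → ℝ}, MemM n f →
      Integrable (fun ω => f ω * m ω) (lam n) := by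
    intro f hf
    refine integrable_bdd (hf.1.mul hmM) (C := 1) fun ω => ?_
    rw [abs_le]
    constructor <;> nlinarith [(hf.2 ω).1, (hf.2 ω).2, hm0 ω, hm1 ω]
  have vol1_nonneg : ∀ {f : (Fin n → ℝ) → ℝ}, MemM n f → 0 ≤ vol1 n f := by
    intro f hf
    exact integral_nonneg fun ω => (hf.2 ω).1
  have two_le : ∀ {f : (Fin n → ℝ) → ℝ}, MemM n f →
      2 * (∫ ω, f ω * m ω ∂(lam n)) ≤ vol1 n f + vol1 n m := by
    intro f hf
    have h1 : (∫ ω, f ω * m ω ∂(lam n)) ≤ vol1 n f :=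
      integral_mono (int_mul_m hf) (int_of_M hf)
        (fun ω => by nlinarith [(hf.2 ω).1, (hf.2 ω).2, hm0 ω, hm1 ω])
    have h2 : (∫ ω, f ω * m ω ∂(lam n)) ≤ vol1 n m :=
      integral_mono (int_mul_m hf) (int_of_M ⟨hmM, hm01⟩)
        (fun ω => by nlinarith [(hf.2 ω).1, (hf.2 ω).2, hm0 ω, hm1 ω])
    linarith
  have hden : ∀ {f : (Fin n → ℝ) → ℝ}, MemM n f → 0 < vol1 n f + vol1 n m := by
    intro f hf
    have := vol1_nonneg hf
    linarith
  set d := Dice n m c with hd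
  -- SDvals are nonneg
  have sd_nonneg : ∀ x ∈ SDvals n m, (0:ℝ) ≤ x := by
    rintro x ⟨f, hf, rfl⟩
    have h2 := two_le hf
    have hd' := hden hf
    have hq : 2 * (∫ ω, f ω * m ω ∂(lam n)) / (vol1 n f + vol1 n m) ≤ 1 := by
      rw [div_le_one hd']
      linarith
    have : softDice n m f = 1 - 2 * (∫ ω, f ω * m ω ∂(lam n)) / (vol1 n f + vol1 n m) := rfl
    rw [this]
    linarith
  -- minimality: Dice over M is at most d
  have hmax : ∀ {f : (Fin n → ℝ) → ℝ}, MemM n f →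
      2 * (∫ ω, f ω * m ω ∂(lam n)) / (vol1 n f + vol1 n m) ≤ d := by
    intro f hf
    have hmem : softDice n m f ∈ SDvals n m := ⟨f, hf, rfl⟩
    have hle : softDice n m c ≤ softDice n m f := by
      rw [hmin]; exact csInf_le ⟨0, sd_nonneg⟩ hmem
    have e1 : softDice n m f
        = 1 - 2 * (∫ ω, f ω * m ω ∂(lam n)) / (vol1 n f + vol1 n m) := rfl
    have e2 : softDice n m c = 1 - d := rfl
    rw [e1, e2] at hle
    linarith
  -- the linear functional g = 2m - d
  set g : (Fin n → ℝ) → ℝ := fun ω => 2 * m ω - d with hg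
  have hgM : Measurable g := (hmM.const_mul 2).sub measurable_const
  have hgbd : ∀ ω, |g ω| ≤ 2 + |d| := by
    intro ω
    simp only [hg]
    rw [abs_le]
    constructor <;> nlinarith [hm0 ω, hm1 ω, le_abs_self d, neg_abs_le d]
  have int_mul_g : ∀ {f : (Fin n → ℝ) → ℝ}, MemM n f →
      Integrable (fun ω => f ω * g ω) (lam n) := by
    intro f hf
    refine integrable_bdd (hf.1.mul hgM) (C := 2 + |d|) fun ω => ?_
    have h1 : |f ω| ≤ 1 := abs_le.2 ⟨by linarith [(hf.2 ω).1], (hf.2 ω).2⟩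
    calc |f ω * g ω| = |f ω| * |g ω| := abs_mul _ _
      _ ≤ 1 * (2 + |d|) :=
        mul_le_mul h1 (hgbd ω) (abs_nonneg _) zero_le_one
      _ = 2 + |d| := one_mul _
  have lin : ∀ {f : (Fin n → ℝ) → ℝ}, MemM n f →
      (∫ ω, f ω * g ω ∂(lam n))
        = 2 * (∫ ω, f ω * m ω ∂(lam n)) - d * vol1 n f := by
    intro f hf
    have h1 : (fun ω => f ω * g ω) = fun ω => 2 * (f ω * m ω) - d * f ω := by
      funext ω; simp only [hg]; ring
    rw [h1, integral_sub ((int_mul_m hf).const_mul 2) ((int_of_M hf).const_mul d),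
      integral_const_mul, integral_const_mul]
    rfl
  -- key bound over M
  have key : ∀ {f : (Fin n → ℝ) → ℝ}, MemM n f →
      (∫ ω, f ω * g ω ∂(lam n)) ≤ d * vol1 n m := by
    intro f hf
    have h := hmax hf
    rw [div_le_iff₀ (hden hf)] at h
    rw [lin hf]
    nlinarith [h]
  -- equality at c
  have keyc : (∫ ω, c ω * g ω ∂(lam n)) = d * vol1 n m := by
    rw [lin ⟨hcM, hc01⟩]
    have hdc : d * (vol1 n c + vol1 n m) = 2 * ∫ ω, c ω * m ω ∂(lam n) := by
      rw [hd]
      unfold Dice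
      rw [div_mul_cancel₀ _ (hden ⟨hcM, hc01⟩).ne']
    nlinarith [hdc]
  -- the indicator of {g > 0}
  set s' : (Fin n → ℝ) → ℝ := fun ω => if 0 < g ω then 1 else 0 with hs'
  have hs'M : MemM n s' := by
    refine ⟨Measurable.ite (measurableSet_lt measurable_const hgM)
      measurable_const measurable_const, fun ω => ?_⟩
    by_cases h : 0 < g ω <;> simp [hs', h]
  have hpt : ∀ ω, c ω * g ω ≤ s' ω * g ω := by
    intro ω
    by_cases h : 0 < g ω
    · simp only [hs', if_pos h, one_mul]
      nlinarith [(hc01 ω).2]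
    · simp only [hs', if_neg h, zero_mul]
      push_neg at h
      nlinarith [(hc01 ω).1]
  have h0 : (∫ ω, (s' ω * g ω - c ω * g ω) ∂(lam n)) = 0 := by
    rw [integral_sub (int_mul_g hs'M) (int_mul_g ⟨hcM, hc01⟩)]
    have h1 := key hs'M
    have h3 : (∫ ω, c ω * g ω ∂(lam n)) ≤ ∫ ω, s' ω * g ω ∂(lam n) :=
      integral_mono (int_mul_g ⟨hcM, hc01⟩) (int_mul_g hs'M) hpt
    rw [keyc] at h3 ⊢
    linarith
  have hae : ∀ᵐ ω ∂(lam n), s' ω * g ω - c ω * g ω = 0 := by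
    have := (integral_eq_zero_iff_of_nonneg
      (fun ω => sub_nonneg.2 (hpt ω))
      ((int_mul_g hs'M).sub (int_mul_g ⟨hcM, hc01⟩))).1 h0
    filter_upwards [this] with ω hω using hω
  -- the threshold function
  set s : (Fin n → ℝ) → ℝ := fun ω => if a ≤ c ω then (1:ℝ) else 0 with hsdef
  have haes : ∀ᵐ ω ∂(lam n), s ω * g ω = c ω * g ω := by
    filter_upwards [hae] with ω hω
    rcases lt_trichotomy (g ω) 0 with h | h | h
    · have hs'0 : s' ω = 0 := by simp [hs', not_lt.2 h.le]
      rw [hs'0, zero_mul] at hω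
      have hcg : c ω * g ω = 0 := by linarith
      have hc0 : c ω = 0 := by
        rcases mul_eq_zero.1 hcg with h' | h'
        · exact h'
        · exact absurd h' h.ne
      have : ¬ a ≤ c ω := by rw [hc0]; linarith
      simp [hsdef, this, hcg]
    · simp [h]
    · have hs'1 : s' ω = 1 := by simp [hs', h]
      rw [hs'1, one_mul] at hω
      have hc1 : c ω = 1 := by
        have : (c ω - 1) * g ω = 0 := by linear_combination -hω
        rcases mul_eq_zero.1 this with h' | h'
        · linarith
        · exact absurd h' h.ne'
      have : a ≤ c ω := by rw [hc1]; linarith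
      simp only [hsdef, if_pos this, one_mul]
      linarith
  have hint_s : (∫ ω, s ω * g ω ∂(lam n)) = ∫ ω, c ω * g ω ∂(lam n) :=
    integral_congr_ae haes
  have hsS : MemS n s := by
    refine ⟨Measurable.ite (measurableSet_le measurable_const hcM)
      measurable_const measurable_const, fun ω => ?_⟩
    by_cases h : a ≤ c ω <;> simp [hsdef, h]
  have memS_memM : ∀ {f : (Fin n → ℝ) → ℝ}, MemS n f → MemM n f := by
    intro f hf
    refine ⟨hf.1, fun ω => ?_⟩
    rcases hf.2 ω with h | h <;> simp [h]
  have hsM : MemM n s := memS_memM hsS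
  have hDs : Dice n m s = d := by
    have h1 : (∫ ω, s ω * g ω ∂(lam n)) = d * vol1 n m := by rw [hint_s, keyc]
    rw [lin hsM] at h1
    unfold Dice
    rw [div_eq_iff (hden hsM).ne']
    nlinarith [h1]
  have hmemD : d ∈ Dvals n m := ⟨s, hsS, hDs.symm⟩
  have hub : ∀ x ∈ Dvals n m, x ≤ d := by
    rintro x ⟨f, hfS, rfl⟩
    exact hmax (memS_memM hfS)
  have : sSup (Dvals n m) = d :=
    le_antisymm (csSup_le ⟨d, hmemD⟩ hub) (le_csSup ⟨d, hub⟩ hmemD)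
  rw [this]
  exact hDs
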